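/- A Hurwitz quaternion p is a Hurwitz prime (i.e., p is nonzero, not a unit, and cannot be written as a product of two non-unit Hurwitz quaternions) if and only if its norm ‖p‖ is a (rational) prime number. -/

import Mathlib

noncomputable def qNorm (a : Quaternion ℝ) : ℝ :=
  a.re ^ 2 + a.imI ^ 2 + a.imJ ^ 2 + a.imK ^ 2

def IsHurwitz (a : Quaternion ℝ) : Prop :=
  (∃ x₁ x₂ x₃ x₄ : ℤ, a = ⟨(x₁ : ℝ), x₂, x₃, x₄⟩) ∨
  (∃ x₁ x₂ x₃ x₄ : ℤ, a = ⟨(x₁ : ℝ) + 1/2, (x₂ : ℝ) + 1/2, (x₃ : ℝ) + 1/2, (x₄ : ℝ) + 1/2⟩)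

def IsHurwitzPrime (p : Quaternion ℝ) : Prop :=
  IsHurwitz p ∧ ∃ r : ℕ, r.Prime ∧ qNorm p = r

lemma qNorm_eq_normSq (a : Quaternion ℝ) : qNorm a = Quaternion.normSq a := by
  rw [Quaternion.normSq_def']; rfl

lemma qNorm_mul (a b : Quaternion ℝ) : qNorm (a * b) = qNorm a * qNorm b := by
  simp [qNorm_eq_normSq, map_mul]

lemma qNorm_eq_zero {a : Quaternion ℝ} : qNorm a = 0 ↔ a = 0 := by
  rw [qNorm_eq_normSq]; exact_mod_cast Quaternion.normSq_eq_zero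

lemma qNorm_nonneg (a : Quaternion ℝ) : 0 ≤ qNorm a := by
  unfold qNorm; positivity

lemma qNorm_star (a : Quaternion ℝ) : qNorm (star a) = qNorm a := by
  simp [qNorm_eq_normSq, Quaternion.normSq_star]

lemma self_mul_star (a : Quaternion ℝ) : a * star a = ((qNorm a : ℝ) : Quaternion ℝ) := by
  rw [Quaternion.self_mul_star, qNorm_eq_normSq]

lemma star_mul_self (a : Quaternion ℝ) : star a * a = ((qNorm a : ℝ) : Quaternion ℝ) := by
  rw [Quaternion.star_mul_self, qNorm_eq_normSq]

/-- Coordinates with respect to the basis 1, i, j, ω. -/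
lemma isHurwitz_iff (a : Quaternion ℝ) :
    IsHurwitz a ↔ ∃ c₁ c₂ c₃ c₄ : ℤ,
      a = ⟨(c₁ : ℝ) + c₄ / 2, (c₂ : ℝ) + c₄ / 2, (c₃ : ℝ) + c₄ / 2, (c₄ : ℝ) / 2⟩ := by
  constructor
  · rintro (⟨x₁, x₂, x₃, x₄, rfl⟩ | ⟨x₁, x₂, x₃, x₄, rfl⟩)
    · exact ⟨x₁ - x₄, x₂ - x₄, x₃ - x₄, 2 * x₄, by ext <;> push_cast <;> ring⟩
    · exact ⟨x₁ - x₄, x₂ - x₄, x₃ - x₄, 2 * x₄ + 1, by ext <;> push_cast <;> ring⟩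
  · rintro ⟨c₁, c₂, c₃, c₄, rfl⟩
    rcases Int.even_or_odd c₄ with ⟨m, hm⟩ | ⟨m, hm⟩
    · exact Or.inl ⟨c₁ + m, c₂ + m, c₃ + m, m, by subst hm; ext <;> push_cast <;> ring⟩
    · exact Or.inr ⟨c₁ + m, c₂ + m, c₃ + m, m, by subst hm; ext <;> push_cast <;> ring⟩
lemma IsHurwitz.mul {a b : Quaternion ℝ} (ha : IsHurwitz a) (hb : IsHurwitz b) :
    IsHurwitz (a * b) := by
  rw [isHurwitz_iff] at ha hb ⊢
  obtain ⟨c₁, c₂, c₃, c₄, rfl⟩ := ha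
  obtain ⟨d₁, d₂, d₃, d₄, rfl⟩ := hb
  refine ⟨c₁*d₁ - c₂*d₂ - c₂*d₃ - c₂*d₄ + c₃*d₂ - c₃*d₃ - c₄*d₃ - c₄*d₄,
          c₁*d₂ + c₂*d₁ - c₂*d₃ + c₃*d₂ + c₃*d₄ + c₄*d₂ - c₄*d₃,
          c₁*d₃ - c₂*d₃ - c₂*d₄ + c₃*d₁ + c₃*d₂ + c₃*d₄ + c₄*d₂,
          c₁*d₄ + 2*c₂*d₃ + c₂*d₄ - 2*c₃*d₂ - c₃*d₄ + c₄*d₁ - c₄*d₂ + c₄*d₃ + c₄*d₄, ?_⟩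
  ext
  · erw [Quaternion.re_mul] <;> simp <;> push_cast <;> ring
  · erw [Quaternion.imI_mul] <;> simp <;> push_cast <;> ring
  · erw [Quaternion.imJ_mul] <;> simp <;> push_cast <;> ring
  · erw [Quaternion.imK_mul] <;> simp <;> push_cast <;> ring

lemma IsHurwitz.sub {a b : Quaternion ℝ} (ha : IsHurwitz a) (hb : IsHurwitz b) :
    IsHurwitz (a - b) := by
  rw [isHurwitz_iff] at ha hb ⊢
  obtain ⟨c₁, c₂, c₃, c₄, rfl⟩ := ha
  obtain ⟨d₁, d₂, d₃, d₄, rfl⟩ := hb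
  exact ⟨c₁ - d₁, c₂ - d₂, c₃ - d₃, c₄ - d₄, by
    ext
    · erw [Quaternion.re_sub] <;> simp <;> push_cast <;> ring
    · erw [Quaternion.imI_sub] <;> simp <;> push_cast <;> ring
    · erw [Quaternion.imJ_sub] <;> simp <;> push_cast <;> ring
    · erw [Quaternion.imK_sub] <;> simp <;> push_cast <;> ring⟩

lemma IsHurwitz.star' {a : Quaternion ℝ} (ha : IsHurwitz a) : IsHurwitz (star a) := by
  rw [isHurwitz_iff] at ha ⊢
  obtain ⟨c₁, c₂, c₃, c₄, rfl⟩ := ha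
  exact ⟨c₁ + c₄, -c₂, -c₃, -c₄, by
    ext
    · erw [Quaternion.re_star] <;> simp <;> push_cast <;> ring
    · erw [Quaternion.imI_star] <;> simp <;> push_cast <;> ring
    · erw [Quaternion.imJ_star] <;> simp <;> push_cast <;> ring
    · erw [Quaternion.imK_star] <;> simp <;> push_cast <;> ring⟩

lemma isHurwitz_natCast (n : ℕ) : IsHurwitz ((n : ℝ) : Quaternion ℝ) :=
  Or.inl ⟨n, 0, 0, 0, by ext <;> simp⟩

lemma isHurwitz_one : IsHurwitz (1 : Quaternion ℝ) := by
  have := isHurwitz_natCast 1; simpa using this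

lemma qNorm_natCast (n : ℕ) : qNorm ((n : ℝ) : Quaternion ℝ) = (n : ℝ) ^ 2 := by
  simp [qNorm]

lemma IsHurwitz.qNorm_nat {a : Quaternion ℝ} (ha : IsHurwitz a) :
    ∃ n : ℕ, qNorm a = n := by
  rw [isHurwitz_iff] at ha
  obtain ⟨c₁, c₂, c₃, c₄, rfl⟩ := ha
  have h : qNorm ⟨(c₁ : ℝ) + c₄ / 2, (c₂ : ℝ) + c₄ / 2, (c₃ : ℝ) + c₄ / 2, (c₄ : ℝ) / 2⟩ =
      ((c₁^2 + c₂^2 + c₃^2 + c₄^2 + c₄*(c₁+c₂+c₃) : ℤ) : ℝ) := by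
    unfold qNorm; push_cast; ring
  have hnn : (0:ℝ) ≤ ((c₁^2 + c₂^2 + c₃^2 + c₄^2 + c₄*(c₁+c₂+c₃) : ℤ) : ℝ) := by
    rw [← h]; exact qNorm_nonneg _
  lift (c₁^2 + c₂^2 + c₃^2 + c₄^2 + c₄*(c₁+c₂+c₃) : ℤ) to ℕ using (by exact_mod_cast hnn) with n hn
  exact ⟨n, by exact_mod_cast h⟩

lemma half_coord {y : ℝ} (h : (y - round y) ^ 2 = 1 / 4) : ∃ m : ℤ, y = (m : ℝ) + 1 / 2 := by
  have h2 : (y - round y) ^ 2 = (1/2 : ℝ) ^ 2 := by rw [h]; norm_num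
  rcases sq_eq_sq_iff_eq_or_eq_neg.mp h2 with h3 | h3
  · exact ⟨round y, by linarith⟩
  · exact ⟨round y - 1, by push_cast; linarith⟩

lemma four_sum_lt {a b c d : ℝ} (h1 : a ≤ 1/4) (h2 : b ≤ 1/4) (h3 : c ≤ 1/4)
    (h4 : d ≤ 1/4) (h : ¬(a = 1/4 ∧ b = 1/4 ∧ c = 1/4 ∧ d = 1/4)) : a + b + c + d < 1 := by
  rcases not_and_or.mp h with h | h
  · have := lt_of_le_of_ne h1 h; linarith
  rcases not_and_or.mp h with h | h
  · have := lt_of_le_of_ne h2 h; linarith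
  rcases not_and_or.mp h with h | h
  · have := lt_of_le_of_ne h3 h; linarith
  · have := lt_of_le_of_ne h4 h; linarith

lemma exists_close (x : Quaternion ℝ) : ∃ h : Quaternion ℝ, IsHurwitz h ∧ qNorm (x - h) < 1 := by
  have hb : ∀ y : ℝ, (y - round y) ^ 2 ≤ 1 / 4 := by
    intro y
    have := abs_sub_round y
    have h2 : (y - round y)^2 = |y - round y|^2 := (sq_abs _).symm
    rw [h2]
    nlinarith [abs_nonneg (y - round y)]
  by_cases hc : (x.re - round x.re) ^ 2 = 1/4 ∧ (x.imI - round x.imI) ^ 2 = 1/4 ∧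
      (x.imJ - round x.imJ) ^ 2 = 1/4 ∧ (x.imK - round x.imK) ^ 2 = 1/4
  · obtain ⟨m₁, hm₁⟩ := half_coord hc.1
    obtain ⟨m₂, hm₂⟩ := half_coord hc.2.1
    obtain ⟨m₃, hm₃⟩ := half_coord hc.2.2.1
    obtain ⟨m₄, hm₄⟩ := half_coord hc.2.2.2
    refine ⟨x, Or.inr ⟨m₁, m₂, m₃, m₄, ?_⟩, by simp [qNorm, Quaternion.re_zero, Quaternion.imI_zero, Quaternion.imJ_zero, Quaternion.imK_zero]⟩
    ext <;> assumption
  · refine ⟨⟨(round x.re : ℝ), (round x.imI : ℝ), (round x.imJ : ℝ), (round x.imK : ℝ)⟩,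
      Or.inl ⟨_, _, _, _, rfl⟩, ?_⟩
    have hq : qNorm (x - ⟨(round x.re : ℝ), (round x.imI : ℝ), (round x.imJ : ℝ),
        (round x.imK : ℝ)⟩) = (x.re - round x.re)^2 + (x.imI - round x.imI)^2 +
        (x.imJ - round x.imJ)^2 + (x.imK - round x.imK)^2 := by
      simp [qNorm, Quaternion.re_sub, Quaternion.imI_sub, Quaternion.imJ_sub,
        Quaternion.imK_sub]; rfl
    rw [hq]
    exact four_sum_lt (hb _) (hb _) (hb _) (hb _) hc

lemma qNorm_pos {b : Quaternion ℝ} (hb : b ≠ 0) : 0 < qNorm b :=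
  lt_of_le_of_ne (qNorm_nonneg b) (fun h => hb (qNorm_eq_zero.mp h.symm))

lemma div_alg (a b : Quaternion ℝ) (hb : b ≠ 0) :
    ∃ c : Quaternion ℝ, IsHurwitz c ∧ qNorm (a - c * b) < qNorm b := by
  obtain ⟨c, hc, hlt⟩ := exists_close (a * b⁻¹)
  refine ⟨c, hc, ?_⟩
  have key : a - c * b = (a * b⁻¹ - c) * b := by
    rw [sub_mul, mul_assoc, inv_mul_cancel₀ hb, mul_one]
  rw [key, qNorm_mul]
  calc qNorm (a * b⁻¹ - c) * qNorm b < 1 * qNorm b := by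
        exact mul_lt_mul_of_pos_right hlt (qNorm_pos hb)
    _ = qNorm b := one_mul _

lemma IsHurwitz.add {a b : Quaternion ℝ} (ha : IsHurwitz a) (hb : IsHurwitz b) :
    IsHurwitz (a + b) := by
  rw [isHurwitz_iff] at ha hb ⊢
  obtain ⟨c₁, c₂, c₃, c₄, rfl⟩ := ha
  obtain ⟨d₁, d₂, d₃, d₄, rfl⟩ := hb
  exact ⟨c₁ + d₁, c₂ + d₂, c₃ + d₃, c₄ + d₄, by
    ext
    · erw [Quaternion.re_add] <;> simp <;> push_cast <;> ring
    · erw [Quaternion.imI_add] <;> simp <;> push_cast <;> ring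
    · erw [Quaternion.imJ_add] <;> simp <;> push_cast <;> ring
    · erw [Quaternion.imK_add] <;> simp <;> push_cast <;> ring⟩

lemma isHurwitz_zero : IsHurwitz (0 : Quaternion ℝ) :=
  Or.inl ⟨0, 0, 0, 0, by ext <;> simp <;> rfl⟩

lemma isHurwitz_star_iff {a : Quaternion ℝ} : IsHurwitz a → IsHurwitz (star a) :=
  IsHurwitz.star'

/-- If `p = q * w` with `q` prime, `w` Hurwitz nonzero, then `p` factors into two
non-unit Hurwitz quaternions. -/
lemma factor_of_qw {p : Quaternion ℝ} {q : ℕ} (hq : q.Prime) {w : Quaternion ℝ}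
    (hwH : IsHurwitz w) (hw0 : w ≠ 0) (hw : p = ((q : ℝ) : Quaternion ℝ) * w) :
    ∃ a b : Quaternion ℝ, IsHurwitz a ∧ IsHurwitz b ∧ qNorm a ≠ 1 ∧ qNorm b ≠ 1 ∧ p = a * b := by
  obtain ⟨nw, hnw⟩ := hwH.qNorm_nat
  have hnw0 : nw ≠ 0 := by
    intro h; apply hw0; apply qNorm_eq_zero.mp; rw [hnw, h]; simp
  by_cases hnw1 : nw = 1
  · -- w is a unit; use four squares to split q itself
    obtain ⟨a₀, b₀, c₀, d₀, habcd⟩ := Nat.sum_four_squares q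
    set π : Quaternion ℝ := ⟨(a₀ : ℝ), (b₀ : ℝ), (c₀ : ℝ), (d₀ : ℝ)⟩ with hπ
    have hπH : IsHurwitz π := Or.inl ⟨a₀, b₀, c₀, d₀, by ext <;> push_cast <;> ring⟩
    have hπn : qNorm π = (q : ℝ) := by
      show ((a₀:ℝ))^2 + _ ^2 + _ ^2 + _ ^2 = _
      rw [← habcd]; push_cast; ring
    have hππ : π * star π = ((q : ℝ) : Quaternion ℝ) := by
      rw [self_mul_star, hπn]
    refine ⟨π, star π * w, hπH, hπH.star'.mul hwH, ?_, ?_, ?_⟩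
    · rw [hπn]; exact_mod_cast hq.ne_one
    · rw [qNorm_mul, qNorm_star, hπn, hnw, hnw1]
      simp only [Nat.cast_one, mul_one]
      exact_mod_cast hq.ne_one
    · rw [hw, ← hππ, mul_assoc]
  · refine ⟨((q : ℝ) : Quaternion ℝ), w, isHurwitz_natCast q, hwH, ?_, ?_, hw⟩
    · rw [qNorm_natCast]
      have : q ^ 2 ≠ 1 := by nlinarith [hq.two_le]
      exact_mod_cast this
    · rw [hnw]; exact_mod_cast hnw1

lemma factor_of_composite (p : Quaternion ℝ) (hp : IsHurwitz p) (hp0 : p ≠ 0)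
    (N : ℕ) (hNorm : qNorm p = N) (hN1 : N ≠ 1) (hNP : ¬ N.Prime) :
    ∃ a b : Quaternion ℝ, IsHurwitz a ∧ IsHurwitz b ∧ qNorm a ≠ 1 ∧ qNorm b ≠ 1 ∧ p = a * b := by
  have hN0 : N ≠ 0 := by
    intro h; apply hp0; apply qNorm_eq_zero.mp; rw [hNorm, h]; simp
  set q := N.minFac with hqdef
  have hq : q.Prime := Nat.minFac_prime hN1
  obtain ⟨s, hs⟩ : q ∣ N := Nat.minFac_dvd N
  set Q : Quaternion ℝ := ((q : ℝ) : Quaternion ℝ) with hQdef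
  have hQH : IsHurwitz Q := isHurwitz_natCast q
  have hQnorm : qNorm Q = (q : ℝ) ^ 2 := qNorm_natCast q
  set T : Set ℕ := {n : ℕ | ∃ x y : Quaternion ℝ, IsHurwitz x ∧ IsHurwitz y ∧
    x * p + y * Q ≠ 0 ∧ qNorm (x * p + y * Q) = n} with hTdef
  have hNT : N ∈ T := ⟨1, 0, isHurwitz_one, isHurwitz_zero, by simpa using hp0,
    by simpa using hNorm⟩
  set m := sInf T with hmdef
  obtain ⟨x, y, hx, hy, hd0, hdn⟩ : m ∈ T := Nat.sInf_mem ⟨N, hNT⟩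
  set d : Quaternion ℝ := x * p + y * Q with hddef
  have hdH : IsHurwitz d := (hx.mul hp).add (hy.mul hQH)
  -- every Hurwitz element of the left ideal is a left multiple of d
  have key : ∀ e : Quaternion ℝ, IsHurwitz e →
      (∃ u v : Quaternion ℝ, IsHurwitz u ∧ IsHurwitz v ∧ e = u * p + v * Q) →
      ∃ c : Quaternion ℝ, IsHurwitz c ∧ e = c * d := by
    rintro e he ⟨u, v, hu, hv, hev⟩
    obtain ⟨c, hc, hlt⟩ := div_alg e d hd0
    refine ⟨c, hc, ?_⟩
    by_contra hne
    have hr0 : e - c * d ≠ 0 := fun h => hne (by rw [sub_eq_zero] at h; exact h)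
    have hrH : IsHurwitz (e - c * d) := he.sub (hc.mul hdH)
    obtain ⟨k, hk⟩ := hrH.qNorm_nat
    have harr : (u - c * x) * p + (v - c * y) * Q = e - c * d := by
      rw [hev, hddef]; noncomm_ring
    have hkT : k ∈ T := ⟨u - c * x, v - c * y, hu.sub (hc.mul hx), hv.sub (hc.mul hy),
      by rw [harr]; exact hr0, by rw [harr]; exact hk⟩
    have h1 : m ≤ k := Nat.sInf_le hkT
    have h2 : (k : ℝ) < (m : ℝ) := by rw [← hk, ← hdn]; exact hlt
    exact absurd (Nat.cast_le.mpr h1) (not_le.mpr h2)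
  obtain ⟨a, haH, hpa⟩ := key p hp ⟨1, 0, isHurwitz_one, isHurwitz_zero, by simp⟩
  obtain ⟨b, hbH, hqb⟩ := key Q hQH ⟨0, 1, isHurwitz_zero, isHurwitz_one, by simp⟩
  obtain ⟨na, hna⟩ := haH.qNorm_nat
  have hNam : N = na * m := by
    have h := qNorm_mul a d
    rw [← hpa, hNorm, hna, hdn] at h
    exact_mod_cast h
  obtain ⟨nb, hnb⟩ := hbH.qNorm_nat
  have hq2m : q ^ 2 = nb * m := by
    have h := qNorm_mul b d
    rw [← hqb, hQnorm, hnb, hdn] at h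
    exact_mod_cast h
  have hm0 : m ≠ 0 := by
    rintro h
    rw [h, mul_zero] at hNam
    exact hN0 hNam
  by_cases hm1 : m = 1
  · -- d is a unit
    have hdstar : star d * d = 1 := by
      have h := star_mul_self d
      rw [hdn, hm1] at h
      simpa using h
    have hps : p * star p = ((N : ℝ) : Quaternion ℝ) := by rw [self_mul_star, hNorm]
    set S : Quaternion ℝ := ((s : ℝ) : Quaternion ℝ) with hSdef
    have hNQ : ((N : ℝ) : Quaternion ℝ) = Q * S := by
      rw [hQdef, hSdef, ← Quaternion.coe_mul, hs]; push_cast; ring_nf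
    have h0 : d * star p = Q * (x * S + y * star p) := by
      have e1 : d * star p = x * (p * star p) + y * (Q * star p) := by
        rw [hddef]; noncomm_ring
      rw [e1, hps, hNQ, ← mul_assoc, ← mul_assoc,
        (Quaternion.coe_commutes (q : ℝ) x).symm, (Quaternion.coe_commutes (q : ℝ) y).symm,
        mul_assoc, mul_assoc, ← mul_add]
    have hsp : star p = Q * (star d * (x * S + y * star p)) := by
      calc star p = (star d * d) * star p := by rw [hdstar, one_mul]
        _ = star d * (d * star p) := by rw [mul_assoc]
        _ = star d * (Q * (x * S + y * star p)) := by rw [h0]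
        _ = Q * (star d * (x * S + y * star p)) := by
            rw [← mul_assoc, ← Quaternion.coe_commutes, mul_assoc]
    have hpw : p = Q * star (star d * (x * S + y * star p)) := by
      have h := congrArg star hsp
      rw [star_star, star_mul, Quaternion.star_coe] at h
      exact h.trans ((Quaternion.coe_commutes _ _).symm)
    have hwH : IsHurwitz (star (star d * (x * S + y * star p))) :=
      (hdH.star'.mul ((hx.mul (isHurwitz_natCast s)).add (hy.mul hp.star'))).star'
    have hw0 : star (star d * (x * S + y * star p)) ≠ 0 := by
      intro h
      apply hp0
      rw [hpw, h, mul_zero]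
    exact factor_of_qw hq hwH hw0 hpw
  · by_cases hna1 : na = 1
    · -- a is a unit, N = m divides q^2
      have hNm : N = m := by rw [hNam, hna1, one_mul]
      have hNdvd : N ∣ q ^ 2 := ⟨nb, by rw [hq2m, hNm, mul_comm]⟩
      obtain ⟨i, hi2, hNi⟩ := (Nat.dvd_prime_pow hq).mp hNdvd
      interval_cases i
      · simp at hNi; exact absurd hNi hN1
      · rw [pow_one] at hNi; exact absurd (hNi ▸ hq) hNP
      · -- N = q^2, so nb = 1, b is a unit
        have hnb1 : nb = 1 := by
          have h : nb * m = 1 * m := by rw [one_mul, ← hq2m, ← hNi]; exact hNm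
          exact Nat.eq_of_mul_eq_mul_right (Nat.pos_of_ne_zero hm0) h
        have hbstar : star b * b = 1 := by
          have h := star_mul_self b
          rw [hnb, hnb1] at h
          simpa using h
        have hd_eq : d = star b * Q := by rw [hqb, ← mul_assoc, hbstar, one_mul]
        have hpw : p = Q * (a * star b) := by
          rw [hpa, hd_eq, ← mul_assoc]
          exact (Quaternion.coe_commutes _ _).symm
        have hwH : IsHurwitz (a * star b) := haH.mul hbH.star'
        have hw0 : a * star b ≠ 0 := by
          intro h
          apply hp0
          rw [hpw, h, mul_zero]
        exact factor_of_qw hq hwH hw0 hpw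
    · -- generic case: p = a * d is a genuine factorization
      refine ⟨a, d, haH, hdH, ?_, ?_, hpa⟩
      · rw [hna]; exact_mod_cast hna1
      · rw [hdn]; exact_mod_cast hm1

theorem hurwitz_prime_iff_norm_prime (p : Quaternion ℝ) (hp : IsHurwitz p) :
    (p ≠ 0 ∧ qNorm p ≠ 1 ∧
      ¬ ∃ a b : Quaternion ℝ, IsHurwitz a ∧ IsHurwitz b ∧ qNorm a ≠ 1 ∧ qNorm b ≠ 1 ∧ p = a * b)
    ↔ ∃ r : ℕ, r.Prime ∧ qNorm p = r := by
  constructor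
  · rintro ⟨hp0, h1, hnf⟩
    obtain ⟨N, hNorm⟩ := hp.qNorm_nat
    by_cases hNP : N.Prime
    · exact ⟨N, hNP, hNorm⟩
    · have hN1 : N ≠ 1 := by
        intro h
        apply h1
        rw [hNorm, h, Nat.cast_one]
      exact absurd (factor_of_composite p hp hp0 N hNorm hN1 hNP) hnf
  · rintro ⟨r, hr, hNorm⟩
    have hr0 : r ≠ 0 := hr.ne_zero
    refine ⟨?_, ?_, ?_⟩
    · intro h
      rw [h] at hNorm
      simp [qNorm, Quaternion.re_zero, Quaternion.imI_zero, Quaternion.imJ_zero, Quaternion.imK_zero] at hNorm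
      exact hr0 (by exact_mod_cast hNorm.symm)
    · rw [hNorm]
      exact_mod_cast hr.ne_one
    · rintro ⟨a, b, haH, hbH, ha1, hb1, rfl⟩
      obtain ⟨na, hna⟩ := haH.qNorm_nat
      obtain ⟨nb, hnb⟩ := hbH.qNorm_nat
      have hreq : r = na * nb := by
        have h := qNorm_mul a b
        rw [hNorm, hna, hnb] at h
        exact_mod_cast h
      have hna1 : na ≠ 1 := fun h => ha1 (by rw [hna, h, Nat.cast_one])
      have hnb1 : nb ≠ 1 := fun h => hb1 (by rw [hnb, h, Nat.cast_one])
      rcases hr.eq_one_or_self_of_dvd na ⟨nb, hreq⟩ with h | h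
      · exact hna1 h
      · subst h
        have : nb = 1 := by
          rcases Nat.eq_zero_or_pos nb with h0 | h0
          · rw [h0, mul_zero] at hreq; exact absurd hreq hr0
          · nlinarith [hr.two_le]
        exact hnb1 this
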